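/- Along any sequence {x^k} generated by the algorithm, the successive block updates vanish in the limit: for every i ∈ {1,…,n}, ‖x^{k,i} − x^{k,i−1}‖ = ‖x_i^k − x_i^{k−1}‖ → 0 as k → ∞. -/

import Mathlib

open Finset Filter

noncomputable def obj {d n : ℕ} {J : Type*} (a : J → EuclideanSpace ℝ (Fin d))
    (A : Fin n → Finset J) (dhat : Fin n → J → ℝ)
    (B : Fin n → Finset (Fin n)) (lhat : Fin n → Fin n → ℝ)
    (x : Fin n → EuclideanSpace ℝ (Fin d)) : ℝ :=
  (∑ i, ∑ j ∈ A i, max (‖x i - a j‖ - dhat i j) 0 ^ 2)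
    + (1 / 2) * ∑ i, ∑ q ∈ B i, max (‖x i - x q‖ - lhat i q) 0 ^ 2

noncomputable def projBall {d : ℕ} (a : EuclideanSpace ℝ (Fin d)) (r : ℝ)
    (z : EuclideanSpace ℝ (Fin d)) : EuclideanSpace ℝ (Fin d) :=
  if ‖z - a‖ ≤ r then z else a + (r / ‖z - a‖) • (z - a)

/-- The Coop. PPM algorithm: `X (k+1)` is obtained from `X k` by updating the
blocks successively for `i = 1, …, n`. -/
def IsPPM {d n : ℕ} {J : Type*} (a : J → EuclideanSpace ℝ (Fin d))
    (A : Fin n → Finset J) (dhat : Fin n → J → ℝ)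
    (B : Fin n → Finset (Fin n)) (lhat : Fin n → Fin n → ℝ)
    (X : ℕ → Fin n → EuclideanSpace ℝ (Fin d)) : Prop :=
  ∀ (k : ℕ) (i : Fin n),
    X (k + 1) i = (1 / 2 : ℝ) • X k i
      + (1 / (2 * (((A i).card : ℝ) + ((B i).card : ℝ)))) •
        ((∑ j ∈ A i, projBall (a j) (dhat i j) (X k i))
          + ∑ q ∈ B i, projBall (if q < i then X (k + 1) q else X k q) (lhat i q) (X k i))

/-- The intermediate configuration `x^{k+1, m}`: the first `m` blocks are those of
`X (k+1)` and the remaining blocks are those of `X k`. -/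
def interm {d n : ℕ} (X : ℕ → Fin n → EuclideanSpace ℝ (Fin d)) (k m : ℕ) :
    Fin n → EuclideanSpace ℝ (Fin d) :=
  fun t => if (t : ℕ) < m then X (k + 1) t else X k t

lemma projBall_mem {d : ℕ} (a : EuclideanSpace ℝ (Fin d)) {r : ℝ} (hr : 0 ≤ r)
    (z : EuclideanSpace ℝ (Fin d)) : ‖projBall a r z - a‖ ≤ r := by
  unfold projBall
  split_ifs with h
  · exact h
  · push_neg at h
    have ht : 0 < ‖z - a‖ := lt_of_le_of_lt hr h
    rw [add_sub_cancel_left, norm_smul, Real.norm_eq_abs, abs_div, abs_of_nonneg hr,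
      abs_of_pos ht, div_mul_cancel₀ _ ht.ne']

lemma dist_le_of_mem {d : ℕ} (a : EuclideanSpace ℝ (Fin d)) {r : ℝ} {p : EuclideanSpace ℝ (Fin d)}
    (hp : ‖p - a‖ ≤ r) (x : EuclideanSpace ℝ (Fin d)) :
    max (‖x - a‖ - r) 0 ≤ ‖x - p‖ := by
  refine max_le ?_ (norm_nonneg _)
  have h := norm_sub_le_norm_sub_add_norm_sub x p a
  linarith

lemma projBall_dist {d : ℕ} (a : EuclideanSpace ℝ (Fin d)) {r : ℝ} (hr : 0 ≤ r)
    (z : EuclideanSpace ℝ (Fin d)) : ‖z - projBall a r z‖ = max (‖z - a‖ - r) 0 := by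
  unfold projBall
  split_ifs with h
  · simp [max_eq_right (by linarith : ‖z - a‖ - r ≤ 0)]
  · push_neg at h
    have ht : 0 < ‖z - a‖ := lt_of_le_of_lt hr h
    have : z - (a + (r / ‖z - a‖) • (z - a)) = (1 - r / ‖z - a‖) • (z - a) := by
      module
    rw [this, norm_smul, Real.norm_eq_abs, abs_of_nonneg (by
      rw [sub_nonneg]; exact div_le_one_of_le₀ h.le (norm_nonneg _)), sub_mul,
      div_mul_cancel₀ _ ht.ne', one_mul, max_eq_left (by linarith)]

lemma quad_ident {d : ℕ} {ι : Type*} (S : Finset ι) (p : ι → EuclideanSpace ℝ (Fin d))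
    (y xp : EuclideanSpace ℝ (Fin d)) (hS : 0 < (S.card : ℝ))
    (hxp : xp = (1/2 : ℝ) • y + (1/(2*(S.card : ℝ))) • ∑ m ∈ S, p m) :
    ∑ m ∈ S, ‖y - p m‖^2
      = ∑ m ∈ S, ‖xp - p m‖^2 + 3 * (S.card : ℝ) * ‖xp - y‖^2 := by
  set M : ℝ := (S.card : ℝ) with hM
  have hM0 : M ≠ 0 := hS.ne'
  have hsum : ∑ m ∈ S, p m = (2*M) • xp - M • y := by
    rw [hxp]; match_scalars <;> field_simp <;> ring
  have h1 : ∑ m ∈ S, (xp - p m) = M • (y - xp) := by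
    rw [Finset.sum_sub_distrib, Finset.sum_const, hsum, ← Nat.cast_smul_eq_nsmul ℝ, ← hM]
    module
  have expand : ∀ m ∈ S, ‖y - p m‖^2
      = ‖y - xp‖^2 + 2 * inner ℝ (y - xp) (xp - p m) + ‖xp - p m‖^2 := by
    intro m _
    have : y - p m = (y - xp) + (xp - p m) := by abel
    rw [this, @norm_add_sq_real]
  rw [Finset.sum_congr rfl expand]
  rw [Finset.sum_add_distrib, Finset.sum_add_distrib, Finset.sum_const, ← Finset.mul_sum,
    ← inner_sum, h1, real_inner_smul_right, real_inner_self_eq_norm_sq,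
    nsmul_eq_mul, ← hM, norm_sub_rev xp y]
  ring


lemma obj_update {d n : ℕ} {J : Type*} [Fintype J] (a : J → EuclideanSpace ℝ (Fin d))
    (A : Fin n → Finset J) (dhat : Fin n → J → ℝ)
    (B : Fin n → Finset (Fin n)) (lhat : Fin n → Fin n → ℝ)
    (hBirr : ∀ i : Fin n, i ∉ B i)
    (hBsymm : ∀ i q : Fin n, q ∈ B i ↔ i ∈ B q)
    (hlsymm : ∀ i q : Fin n, lhat i q = lhat q i)
    (x : Fin n → EuclideanSpace ℝ (Fin d)) (i : Fin n) (z : EuclideanSpace ℝ (Fin d)) :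
    obj a A dhat B lhat (Function.update x i z)
      + ((∑ j ∈ A i, max (‖x i - a j‖ - dhat i j) 0 ^ 2)
        + ∑ q ∈ B i, max (‖x i - x q‖ - lhat i q) 0 ^ 2)
      = obj a A dhat B lhat x
      + ((∑ j ∈ A i, max (‖z - a j‖ - dhat i j) 0 ^ 2)
        + ∑ q ∈ B i, max (‖z - x q‖ - lhat i q) 0 ^ 2) := by
  classical
  set x' := Function.update x i z with hx'
  have hx'i : x' i = z := Function.update_self i z x
  have hx'ne : ∀ q : Fin n, q ≠ i → x' q = x q := fun q h => Function.update_of_ne h z x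
  -- A part
  have hA : (∑ i', ∑ j ∈ A i', max (‖x' i' - a j‖ - dhat i' j) 0 ^ 2)
      + ∑ j ∈ A i, max (‖x i - a j‖ - dhat i j) 0 ^ 2
      = (∑ i', ∑ j ∈ A i', max (‖x i' - a j‖ - dhat i' j) 0 ^ 2)
      + ∑ j ∈ A i, max (‖z - a j‖ - dhat i j) 0 ^ 2 := by
    have e1 := Finset.sum_erase_add Finset.univ
      (fun i' => ∑ j ∈ A i', max (‖x' i' - a j‖ - dhat i' j) 0 ^ 2) (Finset.mem_univ i)
    have e2 := Finset.sum_erase_add Finset.univ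
      (fun i' => ∑ j ∈ A i', max (‖x i' - a j‖ - dhat i' j) 0 ^ 2) (Finset.mem_univ i)
    have e3 : ∑ i' ∈ Finset.univ.erase i, ∑ j ∈ A i', max (‖x' i' - a j‖ - dhat i' j) 0 ^ 2
        = ∑ i' ∈ Finset.univ.erase i, ∑ j ∈ A i', max (‖x i' - a j‖ - dhat i' j) 0 ^ 2 := by
      refine Finset.sum_congr rfl fun i' hi' => ?_
      rw [hx'ne i' (Finset.ne_of_mem_erase hi')]
    rw [hx'i] at e1
    linarith [e1, e2, e3]
  -- B part
  have hB : (∑ i', ∑ q ∈ B i', max (‖x' i' - x' q‖ - lhat i' q) 0 ^ 2)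
      + 2 * ∑ q ∈ B i, max (‖x i - x q‖ - lhat i q) 0 ^ 2
      = (∑ i', ∑ q ∈ B i', max (‖x i' - x q‖ - lhat i' q) 0 ^ 2)
      + 2 * ∑ q ∈ B i, max (‖z - x q‖ - lhat i q) 0 ^ 2 := by
    have inner_eq : ∀ i' : Fin n, i' ≠ i →
        ∑ q ∈ B i', max (‖x' i' - x' q‖ - lhat i' q) 0 ^ 2
        = (∑ q ∈ B i', max (‖x i' - x q‖ - lhat i' q) 0 ^ 2)
          + (if i ∈ B i' then
              max (‖x i' - z‖ - lhat i' i) 0 ^ 2 - max (‖x i' - x i‖ - lhat i' i) 0 ^ 2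
            else 0) := by
      intro i' hi'
      rw [hx'ne i' hi']
      by_cases hib : i ∈ B i'
      · rw [if_pos hib]
        have e1 := Finset.sum_erase_add (B i')
          (fun q => max (‖x i' - x' q‖ - lhat i' q) 0 ^ 2) hib
        have e2 := Finset.sum_erase_add (B i')
          (fun q => max (‖x i' - x q‖ - lhat i' q) 0 ^ 2) hib
        have e3 : ∑ q ∈ (B i').erase i, max (‖x i' - x' q‖ - lhat i' q) 0 ^ 2
            = ∑ q ∈ (B i').erase i, max (‖x i' - x q‖ - lhat i' q) 0 ^ 2 := by
          refine Finset.sum_congr rfl fun q hq => ?_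
          rw [hx'ne q (Finset.ne_of_mem_erase hq)]
        rw [hx'i] at e1
        linarith [e1, e2, e3]
      · rw [if_neg hib, add_zero]
        refine Finset.sum_congr rfl fun q hq => ?_
        have : q ≠ i := fun h => hib (h ▸ hq)
        rw [hx'ne q this]
    have e1 := Finset.sum_erase_add Finset.univ
      (fun i' => ∑ q ∈ B i', max (‖x' i' - x' q‖ - lhat i' q) 0 ^ 2) (Finset.mem_univ i)
    have e2 := Finset.sum_erase_add Finset.univ
      (fun i' => ∑ q ∈ B i', max (‖x i' - x q‖ - lhat i' q) 0 ^ 2) (Finset.mem_univ i)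
    have hinneri : ∑ q ∈ B i, max (‖x' i - x' q‖ - lhat i q) 0 ^ 2
        = ∑ q ∈ B i, max (‖z - x q‖ - lhat i q) 0 ^ 2 := by
      refine Finset.sum_congr rfl fun q hq => ?_
      have hqi : q ≠ i := fun h => hBirr i (h ▸ hq)
      rw [hx'i, hx'ne q hqi]
    have e4 : ∑ i' ∈ Finset.univ.erase i, ∑ q ∈ B i', max (‖x' i' - x' q‖ - lhat i' q) 0 ^ 2
        = (∑ i' ∈ Finset.univ.erase i, ∑ q ∈ B i', max (‖x i' - x q‖ - lhat i' q) 0 ^ 2)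
          + ∑ i' ∈ Finset.univ.erase i, (if i ∈ B i' then
              max (‖x i' - z‖ - lhat i' i) 0 ^ 2 - max (‖x i' - x i‖ - lhat i' i) 0 ^ 2
            else 0) := by
      rw [← Finset.sum_add_distrib]
      exact Finset.sum_congr rfl fun i' hi' => inner_eq i' (Finset.ne_of_mem_erase hi')
    have e5 : ∑ i' ∈ Finset.univ.erase i, (if i ∈ B i' then
              max (‖x i' - z‖ - lhat i' i) 0 ^ 2 - max (‖x i' - x i‖ - lhat i' i) 0 ^ 2
            else 0)
        = (∑ q ∈ B i, max (‖z - x q‖ - lhat i q) 0 ^ 2)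
          - ∑ q ∈ B i, max (‖x i - x q‖ - lhat i q) 0 ^ 2 := by
      rw [Finset.sum_erase _ (by simp [hBirr i])]
      have : ∀ i' : Fin n, (if i ∈ B i' then
              max (‖x i' - z‖ - lhat i' i) 0 ^ 2 - max (‖x i' - x i‖ - lhat i' i) 0 ^ 2
            else 0)
          = (if i' ∈ B i then
              max (‖z - x i'‖ - lhat i i') 0 ^ 2 - max (‖x i - x i'‖ - lhat i i') 0 ^ 2
            else 0) := by
        intro i'
        by_cases h : i ∈ B i'
        · rw [if_pos h, if_pos ((hBsymm i i').mpr h), norm_sub_rev (x i') z,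
            norm_sub_rev (x i') (x i), hlsymm i' i]
        · rw [if_neg h, if_neg (fun hc => h ((hBsymm i i').mp hc))]
      rw [Finset.sum_congr rfl fun i' _ => this i', Finset.sum_ite_mem, Finset.univ_inter,
        Finset.sum_sub_distrib]
    rw [hinneri] at e1
    linarith [e1, e2, e4, e5]
  unfold obj
  linarith [hA, hB]

set_option maxHeartbeats 1000000 in
theorem stmt8 (d n : ℕ) (hd : 1 ≤ d) (hn : 1 ≤ n) {J : Type*} [Fintype J]
    (a : J → EuclideanSpace ℝ (Fin d))
    (A : Fin n → Finset J) (dhat : Fin n → J → ℝ)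
    (B : Fin n → Finset (Fin n)) (lhat : Fin n → Fin n → ℝ)
    (hdhat : ∀ i, ∀ j ∈ A i, 0 ≤ dhat i j)
    (hlhat : ∀ i, ∀ q ∈ B i, 0 ≤ lhat i q)
    (hBirr : ∀ i : Fin n, i ∉ B i)
    (hBsymm : ∀ i q : Fin n, q ∈ B i ↔ i ∈ B q)
    (hlsymm : ∀ i q : Fin n, lhat i q = lhat q i)
    (hcard : ∀ i : Fin n, 1 ≤ (A i).card + (B i).card)
    (X : ℕ → Fin n → EuclideanSpace ℝ (Fin d))
    (hX : IsPPM a A dhat B lhat X) :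
    (∀ (k : ℕ) (i : Fin n),
      ‖interm X k ((i : ℕ) + 1) - interm X k (i : ℕ)‖ = ‖X (k + 1) i - X k i‖) ∧
    (∀ i : Fin n,
      Tendsto (fun k : ℕ => ‖X (k + 1) i - X k i‖) atTop (nhds 0)) := by
  classical
  -- Part 1
  have part1 : ∀ (k : ℕ) (i : Fin n),
      ‖interm X k ((i : ℕ) + 1) - interm X k (i : ℕ)‖ = ‖X (k + 1) i - X k i‖ := by
    intro k i
    have hsingle : interm X k ((i : ℕ) + 1) - interm X k (i : ℕ)
        = Pi.single i (X (k + 1) i - X k i) := by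
      funext t
      by_cases ht : t = i
      · subst ht
        simp [interm, Pi.sub_apply, Nat.lt_succ_self, lt_irrefl]
      · have htv : (t : ℕ) ≠ (i : ℕ) := fun h => ht (Fin.ext h)
        rcases lt_or_ge (t : ℕ) (i : ℕ) with h | h
        · simp [interm, Pi.sub_apply, h, Nat.lt_succ_of_lt h, Pi.single_eq_of_ne ht]
        · have h2 : ¬ (t : ℕ) < (i : ℕ) + 1 := by omega
          have h3 : ¬ (t : ℕ) < (i : ℕ) := by omega
          simp [interm, Pi.sub_apply, h2, h3, Pi.single_eq_of_ne ht]
    rw [hsingle, Pi.norm_single]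
  refine ⟨part1, ?_⟩
  -- basic facts about interm
  have hinterm0 : ∀ k, interm X k 0 = X k := by
    intro k; funext t; simp [interm]
  have hintermn : ∀ k m, n ≤ m → interm X k m = X (k + 1) := by
    intro k m hm; funext t
    simp [interm, lt_of_lt_of_le t.isLt hm]
  have hintermi : ∀ k (i : Fin n), interm X k (i : ℕ) i = X k i := by
    intro k i; simp [interm]
  -- key descent inequality
  have key : ∀ (k : ℕ) (i : Fin n),
      obj a A dhat B lhat (interm X k ((i : ℕ) + 1)) + ‖X (k + 1) i - X k i‖ ^ 2
        ≤ obj a A dhat B lhat (interm X k (i : ℕ)) := by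
    intro k i
    set c : Fin n → EuclideanSpace ℝ (Fin d) := interm X k (i : ℕ) with hc
    set y : EuclideanSpace ℝ (Fin d) := X k i with hy
    set xp : EuclideanSpace ℝ (Fin d) := X (k + 1) i with hxp
    have hupd : interm X k ((i : ℕ) + 1) = Function.update c i xp := by
      funext t
      by_cases ht : t = i
      · subst ht
        simp [interm, hc, Function.update_self, Nat.lt_succ_self, hxp]
      · have htv : (t : ℕ) ≠ (i : ℕ) := fun h => ht (Fin.ext h)
        rw [Function.update_of_ne ht]
        have : (t : ℕ) < (i : ℕ) + 1 ↔ (t : ℕ) < (i : ℕ) := by omega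
        simp [interm, hc, this]
    -- the projections
    set PA : J → EuclideanSpace ℝ (Fin d) := fun j => projBall (a j) (dhat i j) y with hPA
    set PB : Fin n → EuclideanSpace ℝ (Fin d) := fun q => projBall (c q) (lhat i q) y with hPB
    set S : Finset (J ⊕ Fin n) := (A i).disjSum (B i) with hS
    have hScard : (S.card : ℝ) = ((A i).card : ℝ) + ((B i).card : ℝ) := by
      rw [hS, Finset.card_disjSum]; push_cast; ring
    have hSpos : 0 < (S.card : ℝ) := by
      rw [hScard]
      have := hcard i
      have h1 : (1 : ℝ) ≤ ((A i).card : ℝ) + ((B i).card : ℝ) := by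
        have := hcard i; push_cast; exact_mod_cast this
      linarith
    have hBsum : ∑ q ∈ B i, projBall (if q < i then X (k + 1) q else X k q) (lhat i q) (X k i)
        = ∑ q ∈ B i, PB q := by
      refine Finset.sum_congr rfl fun q hq => ?_
      have : (if q < i then X (k + 1) q else X k q) = c q := by
        simp only [hc, interm]
        rfl
      rw [this, hPB, hy]
    have halg : xp = (1 / 2 : ℝ) • y
        + (1 / (2 * (S.card : ℝ))) • ∑ m ∈ S, Sum.elim PA PB m := by
      rw [Finset.sum_sumElim, hScard, hxp, hy, hX k i, hBsum]
    have hquad := quad_ident S (Sum.elim PA PB) y xp hSpos halg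
    -- identify the objective pieces with distances to projections
    have hphiy : (∑ j ∈ A i, max (‖y - a j‖ - dhat i j) 0 ^ 2)
        + ∑ q ∈ B i, max (‖y - c q‖ - lhat i q) 0 ^ 2
        = ∑ m ∈ S, ‖y - Sum.elim PA PB m‖ ^ 2 := by
      rw [hS, Finset.sum_disjSum]
      simp only [Sum.elim_inl, Sum.elim_inr]
      congr 1
      · exact Finset.sum_congr rfl fun j hj => by
          rw [hPA]; rw [← projBall_dist (a j) (hdhat i j hj) y]
      · exact Finset.sum_congr rfl fun q hq => by
          rw [hPB]; rw [← projBall_dist (c q) (hlhat i q hq) y]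
    have hphix : (∑ j ∈ A i, max (‖xp - a j‖ - dhat i j) 0 ^ 2)
        + ∑ q ∈ B i, max (‖xp - c q‖ - lhat i q) 0 ^ 2
        ≤ ∑ m ∈ S, ‖xp - Sum.elim PA PB m‖ ^ 2 := by
      rw [hS, Finset.sum_disjSum]
      simp only [Sum.elim_inl, Sum.elim_inr]
      refine add_le_add ?_ ?_
      · refine Finset.sum_le_sum fun j hj => ?_
        refine pow_le_pow_left₀ (le_max_right _ 0) ?_ 2
        exact dist_le_of_mem (a j) (projBall_mem (a j) (hdhat i j hj) y) xp
      · refine Finset.sum_le_sum fun q hq => ?_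
        refine pow_le_pow_left₀ (le_max_right _ 0) ?_ 2
        exact dist_le_of_mem (c q) (projBall_mem (c q) (hlhat i q hq) y) xp
    have hdesc : (∑ j ∈ A i, max (‖xp - a j‖ - dhat i j) 0 ^ 2)
        + (∑ q ∈ B i, max (‖xp - c q‖ - lhat i q) 0 ^ 2) + ‖xp - y‖ ^ 2
        ≤ (∑ j ∈ A i, max (‖y - a j‖ - dhat i j) 0 ^ 2)
          + ∑ q ∈ B i, max (‖y - c q‖ - lhat i q) 0 ^ 2 := by
      have hS1 : (1 : ℝ) ≤ (S.card : ℝ) := by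
        rw [hScard]; exact_mod_cast hcard i
      have h1 : (1 : ℝ) * ‖xp - y‖ ^ 2 ≤ 3 * (S.card : ℝ) * ‖xp - y‖ ^ 2 := by
        nlinarith [sq_nonneg ‖xp - y‖]
      nlinarith [hquad, hphiy, hphix]
    have hou := obj_update a A dhat B lhat hBirr hBsymm hlsymm c i xp
    rw [hupd]
    have hci : c i = y := by rw [hc, hy]; exact hintermi k i
    rw [hci] at hou
    linarith [hou, hdesc]
  -- monotonicity
  have mono : ∀ k m, obj a A dhat B lhat (interm X k (m + 1))
      ≤ obj a A dhat B lhat (interm X k m) := by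
    intro k m
    by_cases hm : m < n
    · have h := key k ⟨m, hm⟩
      have := sq_nonneg ‖X (k + 1) ⟨m, hm⟩ - X k ⟨m, hm⟩‖
      simp only [Fin.val_mk] at h
      linarith
    · push_neg at hm
      rw [hintermn k (m + 1) (le_trans hm (Nat.le_succ m)), hintermn k m hm]
  have anti : ∀ k m m', m ≤ m' →
      obj a A dhat B lhat (interm X k m') ≤ obj a A dhat B lhat (interm X k m) := by
    intro k m m' h
    induction m' with
    | zero => simp_all
    | succ m'' ih =>
      rcases Nat.lt_or_ge m (m'' + 1) with h' | h'
      · exact le_trans (mono k m'') (ih (Nat.lt_succ_iff.mp h'))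
      · have : m = m'' + 1 := le_antisymm h h'
        rw [this]
  have hobj0 : ∀ x, 0 ≤ obj a A dhat B lhat x := by
    intro x; unfold obj; positivity
  have hbd : ∀ (k : ℕ) (i : Fin n), ‖X (k + 1) i - X k i‖ ^ 2
      ≤ obj a A dhat B lhat (X k) - obj a A dhat B lhat (X (k + 1)) := by
    intro k i
    have h1 := key k i
    have h2 := anti k 0 (i : ℕ) (Nat.zero_le _)
    have h3 := anti k ((i : ℕ) + 1) n i.isLt
    rw [hinterm0 k] at h2
    rw [hintermn k n le_rfl] at h3
    linarith
  intro i
  have hsum : ∀ K : ℕ, ∑ k ∈ Finset.range K, ‖X (k + 1) i - X k i‖ ^ 2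
      ≤ obj a A dhat B lhat (X 0) := by
    intro K
    calc ∑ k ∈ Finset.range K, ‖X (k + 1) i - X k i‖ ^ 2
        ≤ ∑ k ∈ Finset.range K,
            (obj a A dhat B lhat (X k) - obj a A dhat B lhat (X (k + 1))) :=
          Finset.sum_le_sum fun k _ => hbd k i
      _ = obj a A dhat B lhat (X 0) - obj a A dhat B lhat (X K) :=
          Finset.sum_range_sub' (fun k => obj a A dhat B lhat (X k)) K
      _ ≤ obj a A dhat B lhat (X 0) := by linarith [hobj0 (X K)]
  have hsummable : Summable (fun k : ℕ => ‖X (k + 1) i - X k i‖ ^ 2) :=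
    summable_of_sum_range_le (fun k => sq_nonneg _) hsum
  have ht := hsummable.tendsto_atTop_zero
  have heq : (fun k : ℕ => ‖X (k + 1) i - X k i‖)
      = fun k : ℕ => Real.sqrt (‖X (k + 1) i - X k i‖ ^ 2) :=
    funext fun k => (Real.sqrt_sq (norm_nonneg _)).symm
  rw [heq]
  have hcont := (Real.continuous_sqrt.tendsto 0).comp ht
  rw [Real.sqrt_zero] at hcont
  exact hcont
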